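/- (Multivariate division for commutative power series over a finite field.) Let k be a finite field, R = k[[x_1, …, x_n]], and let ⪯ be an additive total order on ℕⁿ. Let F = (f_1, …, f_s) be a tuple of nonzero elements of R, and define Δ_{F,r} = (LM(f_r) + ℕⁿ) ∖ ⋃_{i=1}^{r−1} Δ_{F,i} for 1 ≤ r ≤ s and Δ̄_F = ℕⁿ ∖ ⋃_{i=1}^{s} Δ_{F,i}. Then every f ∈ R can be written as f = q_1 f_1 + ⋯ + q_s f_s + r, where the elements q_1, …, q_s, r ∈ R satisfying supp(q_i) + LM(f_i) ⊆ Δ_{F,i} for all 1 ≤ i ≤ s and supp(r) ⊆ Δ̄_F are unique; moreover, for this expression, LM(f) ⪯ LM(q_i f_i) for every i with q_i f_i ≠ 0. -/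

import Mathlib

/-- The support of a multivariate power series: the set of exponents with nonzero
coefficient. -/
def psupp {n : ℕ} {k : Type*} [Semiring k] (f : MvPowerSeries (Fin n) k) :
    Set (Fin n →₀ ℕ) :=
  {α | MvPowerSeries.coeff α f ≠ 0}

/-- `IsLM le f μ` says that `μ` is the least monomial `LM(f)` of `f` with respect to the
order `le`: `μ` lies in the support of `f` and is `le`-smaller than every element of the
support.  (In particular this forces `f ≠ 0`.) -/
def IsLM {n : ℕ} {k : Type*} [Semiring k] (le : (Fin n →₀ ℕ) → (Fin n →₀ ℕ) → Prop)
    (f : MvPowerSeries (Fin n) k) (μ : Fin n →₀ ℕ) : Prop :=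
  μ ∈ psupp f ∧ ∀ ν ∈ psupp f, le μ ν

/-- `le` is an additive total order on `ℕⁿ`: a total order such that `0 ⪯ α` for all `α`,
and `α ⪯ β` implies `α + γ ⪯ β + γ`.  (Every such order is a well-order.) -/
structure IsAdditiveTotalOrder {n : ℕ} (le : (Fin n →₀ ℕ) → (Fin n →₀ ℕ) → Prop) : Prop where
  total : ∀ α β, le α β ∨ le β α
  antisymm : ∀ α β, le α β → le β α → α = β
  trans : ∀ α β γ, le α β → le β γ → le α γ
  zero_le : ∀ α, le 0 α
  add_right : ∀ α β γ, le α β → le (α + γ) (β + γ)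

/-- Membership in `Δ_{F,r} = (LM(f_r) + ℕⁿ) ∖ ⋃_{i<r} Δ_{F,i}`, where `μ i = LM(f_i)`.
(Unwinding the recursion, `Δ_{F,r} = (μ r + ℕⁿ) ∖ ⋃_{i<r} (μ i + ℕⁿ)`.) -/
def InDelta {n s : ℕ} (μ : Fin s → (Fin n →₀ ℕ)) (r : Fin s) (β : Fin n →₀ ℕ) : Prop :=
  (∃ γ, β = μ r + γ) ∧ ∀ i : Fin s, i < r → ¬ ∃ γ, β = μ i + γ

/-- Membership in `Δ̄_F = ℕⁿ ∖ ⋃_{i=1}^s Δ_{F,i} = ℕⁿ ∖ ⋃_{i=1}^s (μ i + ℕⁿ)`. -/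
def InDeltaBar {n s : ℕ} (μ : Fin s → (Fin n →₀ ℕ)) (β : Fin n →₀ ℕ) : Prop :=
  ∀ i : Fin s, ¬ ∃ γ, β = μ i + γ

namespace Statement13Aux

open Finset MvPowerSeries

variable {n s : ℕ} {k : Type*} [Field k]

/-- The strict version of `le`. -/
def slt (le : (Fin n →₀ ℕ) → (Fin n →₀ ℕ) → Prop) (α β : Fin n →₀ ℕ) : Prop :=
  le α β ∧ α ≠ β

variable {le : (Fin n →₀ ℕ) → (Fin n →₀ ℕ) → Prop}

lemma le_self_add' (hle : IsAdditiveTotalOrder le) (α γ : Fin n →₀ ℕ) : le α (α + γ) := by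
  have h := hle.add_right 0 γ α (hle.zero_le γ)
  rwa [zero_add, add_comm γ α] at h

lemma le_of_exists (hle : IsAdditiveTotalOrder le) {α β : Fin n →₀ ℕ}
    (h : ∃ γ, β = α + γ) : le α β := by
  obtain ⟨γ, rfl⟩ := h; exact le_self_add' hle α γ

lemma slt_add_left (hle : IsAdditiveTotalOrder le) {α β : Fin n →₀ ℕ}
    (h : slt le α β) (γ : Fin n →₀ ℕ) : slt le (γ + α) (γ + β) := by
  refine ⟨?_, ?_⟩
  · have := hle.add_right α β γ h.1
    rwa [add_comm α γ, add_comm β γ] at this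
  · intro he
    exact h.2 (by
      have : α + γ = β + γ := by rw [add_comm α γ, add_comm β γ, he]
      exact add_right_cancel this)

lemma slt_trans (hle : IsAdditiveTotalOrder le) {α β γ : Fin n →₀ ℕ}
    (h1 : slt le α β) (h2 : slt le β γ) : slt le α γ := by
  refine ⟨hle.trans _ _ _ h1.1 h2.1, ?_⟩
  rintro rfl
  exact h2.2 (hle.antisymm _ _ h2.1 h1.1)

lemma sltWF (hle : IsAdditiveTotalOrder le) : WellFounded (slt le) := by
  rw [WellFounded.wellFounded_iff_has_min]
  intro S hS
  by_contra hcon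
  push_neg at hcon
  choose! next hnextS hnext using hcon
  obtain ⟨a, ha⟩ := hS
  set seq : ℕ → (Fin n →₀ ℕ) := fun m => next^[m] a with hseq
  have hseqS : ∀ m, seq m ∈ S := by
    intro m
    induction m with
    | zero => exact ha
    | succ m ih =>
      have : seq (m + 1) = next (seq m) := Function.iterate_succ_apply' next m a
      rw [this]
      exact hnextS _ ih
  have hstep : ∀ m, slt le (seq (m + 1)) (seq m) := by
    intro m
    have : seq (m + 1) = next (seq m) := Function.iterate_succ_apply' next m a
    rw [this]
    exact hnext _ (hseqS m)
  have hdesc : ∀ i d, slt le (seq (i + d + 1)) (seq i) := by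
    intro i d
    induction d with
    | zero => simpa using hstep i
    | succ d ih => exact slt_trans hle (hstep (i + d + 1)) ih
  obtain ⟨i, j, hij, hle'⟩ := (Set.isPWO_of_wellQuasiOrderedLE S).exists_lt hseqS
  have h1 : le (seq i) (seq j) := le_of_exists hle (exists_add_of_le hle')
  have hj : j = i + (j - i - 1) + 1 := by omega
  have h2 := hdesc i (j - i - 1)
  rw [← hj] at h2
  exact h2.2 (hle.antisymm _ _ h2.1 h1)

open Classical in
/-- The finite set of `i` with `μ i ≤ β`. -/
noncomputable def divSet (μ : Fin s → (Fin n →₀ ℕ)) (β : Fin n →₀ ℕ) : Finset (Fin s) :=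
  Finset.univ.filter (fun i => μ i ≤ β)

lemma mem_divSet {μ : Fin s → (Fin n →₀ ℕ)} {β : Fin n →₀ ℕ} {i : Fin s} :
    i ∈ divSet μ β ↔ μ i ≤ β := by
  classical simp [divSet]

/-- `slot μ β` is the least `i` with `μ i ≤ β`, if any. -/
noncomputable def slot (μ : Fin s → (Fin n →₀ ℕ)) (β : Fin n →₀ ℕ) : Option (Fin s) :=
  if h : (divSet μ β).Nonempty then some ((divSet μ β).min' h) else none

lemma exists_iff_le {μ β : Fin n →₀ ℕ} : (∃ γ, β = μ + γ) ↔ μ ≤ β := by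
  rw [le_iff_exists_add]

lemma slot_eq_some_iff {μ : Fin s → (Fin n →₀ ℕ)} {β : Fin n →₀ ℕ} {i : Fin s} :
    slot μ β = some i ↔ InDelta μ i β := by
  unfold slot
  split_ifs with h
  · simp only [Option.some_inj]
    constructor
    · rintro rfl
      refine ⟨exists_iff_le.2 (mem_divSet.1 ((divSet μ β).min'_mem h)), ?_⟩
      intro j hj hex
      exact absurd ((divSet μ β).min'_le j (mem_divSet.2 (exists_iff_le.1 hex)))
        (not_le.2 hj)
    · rintro ⟨hex, hmin⟩
      have hi : i ∈ divSet μ β := mem_divSet.2 (exists_iff_le.1 hex)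
      refine le_antisymm ((divSet μ β).min'_le i hi) ?_
      by_contra hlt
      push_neg at hlt
      exact hmin _ hlt (exists_iff_le.2 (mem_divSet.1 ((divSet μ β).min'_mem h)))
  · simp only [(by simp : (none : Option (Fin s)) ≠ some i), false_iff]
    rintro ⟨hex, -⟩
    exact h ⟨i, mem_divSet.2 (exists_iff_le.1 hex)⟩

lemma slot_eq_none_iff {μ : Fin s → (Fin n →₀ ℕ)} {β : Fin n →₀ ℕ} :
    slot μ β = none ↔ InDeltaBar μ β := by
  unfold slot
  split_ifs with h
  · simp only [(by simp : (some ((divSet μ β).min' h)) ≠ (none : Option (Fin s))), false_iff]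
    intro hbar
    obtain ⟨i, hi⟩ := h
    exact hbar i (exists_iff_le.2 (mem_divSet.1 hi))
  · simp only [true_iff]
    intro i hex
    exact h ⟨i, mem_divSet.2 (exists_iff_le.1 hex)⟩

lemma le_of_slot_some {μ : Fin s → (Fin n →₀ ℕ)} {β : Fin n →₀ ℕ} {i : Fin s}
    (h : slot μ β = some i) : μ i ≤ β :=
  exists_iff_le.1 (slot_eq_some_iff.1 h).1

open Classical in
/-- The auxiliary sum of already-determined contributions. -/
noncomputable def Sfun (le : (Fin n →₀ ℕ) → (Fin n →₀ ℕ) → Prop)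
    (f : Fin s → MvPowerSeries (Fin n) k) (μ : Fin s → (Fin n →₀ ℕ))
    (v : (Fin n →₀ ℕ) → k) (β : Fin n →₀ ℕ) : k :=
  ∑ j : Fin s, ∑ p ∈ Finset.HasAntidiagonal.antidiagonal β,
    if slt le (μ j) p.2 ∧ slot μ (p.1 + μ j) = some j
    then v (p.1 + μ j) * MvPowerSeries.coeff p.2 (f j) else 0

lemma point_slt (hle : IsAdditiveTotalOrder le) {β : Fin n →₀ ℕ} {μj : Fin n →₀ ℕ}
    {p : (Fin n →₀ ℕ) × (Fin n →₀ ℕ)} (hp : p ∈ Finset.HasAntidiagonal.antidiagonal β)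
    (h : slt le μj p.2) : slt le (p.1 + μj) β := by
  have hβ : p.1 + p.2 = β := Finset.HasAntidiagonal.mem_antidiagonal.1 hp
  have := slt_add_left hle h p.1
  rwa [hβ] at this

lemma Sfun_congr (hle : IsAdditiveTotalOrder le) {f : Fin s → MvPowerSeries (Fin n) k}
    {μ : Fin s → (Fin n →₀ ℕ)} {v w : (Fin n →₀ ℕ) → k} {β : Fin n →₀ ℕ}
    (hv : ∀ γ, slt le γ β → v γ = w γ) :
    Sfun le f μ v β = Sfun le f μ w β := by
  unfold Sfun
  refine Finset.sum_congr rfl fun j _ => Finset.sum_congr rfl fun p hp => ?_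
  by_cases h : slt le (μ j) p.2 ∧ slot μ (p.1 + μ j) = some j
  · rw [if_pos h, if_pos h, hv _ (point_slt hle hp h.1)]
  · rw [if_neg h, if_neg h]

open Classical in
/-- The body of the well-founded recursion. -/
noncomputable def ubody (hle : IsAdditiveTotalOrder le)
    (f : Fin s → MvPowerSeries (Fin n) k) (μ : Fin s → (Fin n →₀ ℕ))
    (g : MvPowerSeries (Fin n) k) (β : Fin n →₀ ℕ)
    (rec : ∀ γ, slt le γ β → k) : k :=
  match slot μ β with
  | some i => (MvPowerSeries.coeff (μ i) (f i))⁻¹ * (MvPowerSeries.coeff β g -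
      ∑ j : Fin s, ∑ p ∈ (Finset.HasAntidiagonal.antidiagonal β).attach,
        if h : slt le (μ j) p.1.2 ∧ slot μ (p.1.1 + μ j) = some j
        then rec (p.1.1 + μ j) (point_slt hle p.2 h.1) * MvPowerSeries.coeff p.1.2 (f j)
        else 0)
  | none => MvPowerSeries.coeff β g -
      ∑ j : Fin s, ∑ p ∈ (Finset.HasAntidiagonal.antidiagonal β).attach,
        if h : slt le (μ j) p.1.2 ∧ slot μ (p.1.1 + μ j) = some j
        then rec (p.1.1 + μ j) (point_slt hle p.2 h.1) * MvPowerSeries.coeff p.1.2 (f j)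
        else 0

noncomputable def ufun (hle : IsAdditiveTotalOrder le)
    (f : Fin s → MvPowerSeries (Fin n) k) (μ : Fin s → (Fin n →₀ ℕ))
    (g : MvPowerSeries (Fin n) k) : (Fin n →₀ ℕ) → k :=
  (sltWF hle).fix (ubody hle f μ g)

lemma ubody_eq (hle : IsAdditiveTotalOrder le)
    (f : Fin s → MvPowerSeries (Fin n) k) (μ : Fin s → (Fin n →₀ ℕ))
    (g : MvPowerSeries (Fin n) k) (β : Fin n →₀ ℕ)
    (v : (Fin n →₀ ℕ) → k) (rec : ∀ γ, slt le γ β → k)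
    (hrec : ∀ γ h, rec γ h = v γ) :
    ubody hle f μ g β rec = match slot μ β with
      | some i => (MvPowerSeries.coeff (μ i) (f i))⁻¹ *
          (MvPowerSeries.coeff β g - Sfun le f μ v β)
      | none => MvPowerSeries.coeff β g - Sfun le f μ v β := by
  classical
  have hsum : (∑ j : Fin s, ∑ p ∈ (Finset.HasAntidiagonal.antidiagonal β).attach,
      if h : slt le (μ j) p.1.2 ∧ slot μ (p.1.1 + μ j) = some j
      then rec (p.1.1 + μ j) (point_slt hle p.2 h.1) * MvPowerSeries.coeff p.1.2 (f j)
      else 0) = Sfun le f μ v β := by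
    unfold Sfun
    refine Finset.sum_congr rfl fun j _ => ?_
    rw [← Finset.sum_attach (Finset.HasAntidiagonal.antidiagonal β)
      (fun p => if slt le (μ j) p.2 ∧ slot μ (p.1 + μ j) = some j
        then v (p.1 + μ j) * MvPowerSeries.coeff p.2 (f j) else 0)]
    refine Finset.sum_congr rfl fun p _ => ?_
    by_cases h : slt le (μ j) p.1.2 ∧ slot μ (p.1.1 + μ j) = some j
    · rw [dif_pos h, if_pos h, hrec]
    · rw [dif_neg h, if_neg h]
  unfold ubody
  cases hslot : slot μ β with
  | some i => simp only [hslot, hsum]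
  | none => simp only [hslot, hsum]

lemma ufun_eq (hle : IsAdditiveTotalOrder le)
    (f : Fin s → MvPowerSeries (Fin n) k) (μ : Fin s → (Fin n →₀ ℕ))
    (g : MvPowerSeries (Fin n) k) (β : Fin n →₀ ℕ) :
    ufun hle f μ g β = match slot μ β with
      | some i => (MvPowerSeries.coeff (μ i) (f i))⁻¹ *
          (MvPowerSeries.coeff β g - Sfun le f μ (ufun hle f μ g) β)
      | none => MvPowerSeries.coeff β g - Sfun le f μ (ufun hle f μ g) β := by
  conv_lhs => rw [ufun, WellFounded.fix_eq]
  exact ubody_eq hle f μ g β (ufun hle f μ g) _ (fun γ h => rfl)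

/-- The fixed-point property. -/
def FP (le : (Fin n →₀ ℕ) → (Fin n →₀ ℕ) → Prop)
    (f : Fin s → MvPowerSeries (Fin n) k) (μ : Fin s → (Fin n →₀ ℕ))
    (g : MvPowerSeries (Fin n) k) (v : (Fin n →₀ ℕ) → k) : Prop :=
  ∀ β, v β = match slot μ β with
    | some i => (MvPowerSeries.coeff (μ i) (f i))⁻¹ *
        (MvPowerSeries.coeff β g - Sfun le f μ v β)
    | none => MvPowerSeries.coeff β g - Sfun le f μ v β

lemma fp_ufun (hle : IsAdditiveTotalOrder le)
    (f : Fin s → MvPowerSeries (Fin n) k) (μ : Fin s → (Fin n →₀ ℕ))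
    (g : MvPowerSeries (Fin n) k) : FP le f μ g (ufun hle f μ g) :=
  fun β => ufun_eq hle f μ g β

lemma fp_unique (hle : IsAdditiveTotalOrder le)
    {f : Fin s → MvPowerSeries (Fin n) k} {μ : Fin s → (Fin n →₀ ℕ)}
    {g : MvPowerSeries (Fin n) k} {v w : (Fin n →₀ ℕ) → k}
    (hv : FP le f μ g v) (hw : FP le f μ g w) : v = w := by
  funext β
  refine WellFounded.induction (C := fun b => v b = w b) (sltWF hle) β fun β IH => ?_
  have hS : Sfun le f μ v β = Sfun le f μ w β :=
    Sfun_congr hle (fun γ h => IH γ h)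
  show v β = w β
  rw [hv β, hw β, hS]

/-- The combined coefficient function of a candidate solution `(q', r')`. -/
noncomputable def vfun (μ : Fin s → (Fin n →₀ ℕ))
    (q' : Fin s → MvPowerSeries (Fin n) k) (r' : MvPowerSeries (Fin n) k)
    (β : Fin n →₀ ℕ) : k :=
  match slot μ β with
  | some i => MvPowerSeries.coeff (β - μ i) (q' i)
  | none => MvPowerSeries.coeff β r'

lemma expand (hle : IsAdditiveTotalOrder le)
    {f : Fin s → MvPowerSeries (Fin n) k} {μ : Fin s → (Fin n →₀ ℕ)}
    (hμ : ∀ i, IsLM le (f i) (μ i))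
    (q' : Fin s → MvPowerSeries (Fin n) k) (r' : MvPowerSeries (Fin n) k)
    (hq' : ∀ i γ, MvPowerSeries.coeff γ (q' i) ≠ 0 → slot μ (γ + μ i) = some i)
    (hr' : ∀ β, MvPowerSeries.coeff β r' ≠ 0 → slot μ β = none)
    (β : Fin n →₀ ℕ) :
    MvPowerSeries.coeff β (∑ i, q' i * f i + r') =
      Sfun le f μ (vfun μ q' r') β + (match slot μ β with
        | some i => vfun μ q' r' β * MvPowerSeries.coeff (μ i) (f i)
        | none => vfun μ q' r' β) := by
  classical
  rw [map_add, map_sum]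
  have hterm : ∀ (j : Fin s), ∀ p ∈ Finset.HasAntidiagonal.antidiagonal β,
      MvPowerSeries.coeff p.1 (q' j) * MvPowerSeries.coeff p.2 (f j) =
        (if slt le (μ j) p.2 ∧ slot μ (p.1 + μ j) = some j
          then vfun μ q' r' (p.1 + μ j) * MvPowerSeries.coeff p.2 (f j) else 0) +
        (if p.2 = μ j ∧ slot μ β = some j
          then MvPowerSeries.coeff p.1 (q' j) * MvPowerSeries.coeff p.2 (f j) else 0) := by
    intro j p hp
    have hpβ : p.1 + p.2 = β := Finset.HasAntidiagonal.mem_antidiagonal.1 hp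
    by_cases hc1 : slt le (μ j) p.2 ∧ slot μ (p.1 + μ j) = some j
    · rw [if_pos hc1, if_neg (fun hc2 => hc1.1.2 hc2.1.symm)]
      have hv : vfun μ q' r' (p.1 + μ j) = MvPowerSeries.coeff p.1 (q' j) := by
        unfold vfun
        rw [hc1.2]
        congr 1
        simp
      rw [hv, add_zero]
    · rw [if_neg hc1, zero_add]
      by_cases hc2 : p.2 = μ j ∧ slot μ β = some j
      · rw [if_pos hc2]
      · rw [if_neg hc2]
        by_cases he : p.2 = μ j
        · have hβ' : p.1 + μ j = β := by rw [← he]; exact hpβ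
          have hs : slot μ β ≠ some j := fun h => hc2 ⟨he, h⟩
          have hq0 : MvPowerSeries.coeff p.1 (q' j) = 0 := by
            by_contra h0
            exact hs (by rw [← hβ']; exact hq' j p.1 h0)
          rw [hq0, zero_mul]
        · by_cases hf0 : MvPowerSeries.coeff p.2 (f j) = 0
          · rw [hf0, mul_zero]
          · have hlt : slt le (μ j) p.2 := ⟨(hμ j).2 p.2 hf0, fun h => he h.symm⟩
            have hs : slot μ (p.1 + μ j) ≠ some j := fun h => hc1 ⟨hlt, h⟩
            have hq0 : MvPowerSeries.coeff p.1 (q' j) = 0 := by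
              by_contra h0
              exact hs (hq' j p.1 h0)
            rw [hq0, zero_mul]
  have hsplit : (∑ i : Fin s, MvPowerSeries.coeff β (q' i * f i)) =
      Sfun le f μ (vfun μ q' r') β +
      ∑ j : Fin s, ∑ p ∈ Finset.HasAntidiagonal.antidiagonal β,
        (if p.2 = μ j ∧ slot μ β = some j
          then MvPowerSeries.coeff p.1 (q' j) * MvPowerSeries.coeff p.2 (f j) else 0) := by
    unfold Sfun
    rw [← Finset.sum_add_distrib]
    refine Finset.sum_congr rfl fun j _ => ?_
    rw [MvPowerSeries.coeff_mul, ← Finset.sum_add_distrib]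
    exact Finset.sum_congr rfl (hterm j)
  have hE : (∑ j : Fin s, ∑ p ∈ Finset.HasAntidiagonal.antidiagonal β,
      (if p.2 = μ j ∧ slot μ β = some j
        then MvPowerSeries.coeff p.1 (q' j) * MvPowerSeries.coeff p.2 (f j) else 0)) =
      (match slot μ β with
        | some i => vfun μ q' r' β * MvPowerSeries.coeff (μ i) (f i)
        | none => (0 : k)) := by
    cases hslot : slot μ β with
    | none => simp [hslot]
    | some i0 =>
      have hle0 : μ i0 ≤ β := le_of_slot_some hslot
      rw [Finset.sum_eq_single i0]
      · have hmem : (β - μ i0, μ i0) ∈ Finset.HasAntidiagonal.antidiagonal β := by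
          rw [Finset.HasAntidiagonal.mem_antidiagonal]
          exact tsub_add_cancel_of_le hle0
        rw [Finset.sum_eq_single_of_mem (β - μ i0, μ i0) hmem]
        · rw [if_pos ⟨rfl, rfl⟩]
          have hv : vfun μ q' r' β = MvPowerSeries.coeff (β - μ i0) (q' i0) := by
            unfold vfun; rw [hslot]
          rw [hv]
        · intro p hp hne
          rw [if_neg]
          rintro ⟨hp2, -⟩
          apply hne
          have hpβ : p.1 + p.2 = β := Finset.HasAntidiagonal.mem_antidiagonal.1 hp
          have hp1 : p.1 = β - μ i0 := by
            have : p.1 + μ i0 = β - μ i0 + μ i0 := by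
              rw [tsub_add_cancel_of_le hle0, ← hp2]; exact hpβ
            exact add_right_cancel this
          exact Prod.ext hp1 hp2
      · intro j _ hj
        refine Finset.sum_eq_zero fun p _ => ?_
        rw [if_neg]
        rintro ⟨-, h⟩
        exact hj (Option.some_inj.1 h).symm
      · intro h
        exact absurd (Finset.mem_univ i0) h
  have hrpart : MvPowerSeries.coeff β r' = (match slot μ β with
      | some i => (0 : k)
      | none => vfun μ q' r' β) := by
    cases hslot : slot μ β with
    | some i =>
      by_contra h0
      have : MvPowerSeries.coeff β r' ≠ 0 := by
        intro hz; rw [hz] at h0; exact h0 rfl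
      rw [hr' β this] at hslot
      exact Option.some_ne_none i hslot.symm
    | none => unfold vfun; rw [hslot]
  rw [hsplit, hrpart, hE]
  cases hslot : slot μ β with
  | some i => ring
  | none => ring

lemma fp_of_sol (hle : IsAdditiveTotalOrder le)
    {f : Fin s → MvPowerSeries (Fin n) k} {μ : Fin s → (Fin n →₀ ℕ)}
    {g : MvPowerSeries (Fin n) k}
    (hμ : ∀ i, IsLM le (f i) (μ i))
    (q' : Fin s → MvPowerSeries (Fin n) k) (r' : MvPowerSeries (Fin n) k)
    (hq' : ∀ i γ, MvPowerSeries.coeff γ (q' i) ≠ 0 → slot μ (γ + μ i) = some i)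
    (hr' : ∀ β, MvPowerSeries.coeff β r' ≠ 0 → slot μ β = none)
    (hsum : g = ∑ i, q' i * f i + r') :
    FP le f μ g (vfun μ q' r') := by
  intro β
  have hexp := expand hle hμ q' r' hq' hr' β
  rw [← hsum] at hexp
  cases hslot : slot μ β with
  | some i =>
    rw [hslot] at hexp
    simp only [] at hexp ⊢
    have hc : MvPowerSeries.coeff (μ i) (f i) ≠ 0 := (hμ i).1
    have h2 : vfun μ q' r' β * MvPowerSeries.coeff (μ i) (f i) =
        MvPowerSeries.coeff β g - Sfun le f μ (vfun μ q' r') β := by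
      rw [hexp]; ring
    rw [← h2, mul_comm (vfun μ q' r' β), ← mul_assoc, inv_mul_cancel₀ hc, one_mul]
  | none =>
    rw [hslot] at hexp
    simp only [] at hexp ⊢
    rw [hexp]; ring

open Classical in
noncomputable def qdef (hle : IsAdditiveTotalOrder le)
    (f : Fin s → MvPowerSeries (Fin n) k) (μ : Fin s → (Fin n →₀ ℕ))
    (g : MvPowerSeries (Fin n) k) : Fin s → MvPowerSeries (Fin n) k :=
  fun i γ => if slot μ (γ + μ i) = some i then ufun hle f μ g (γ + μ i) else 0

open Classical in
noncomputable def rdef (hle : IsAdditiveTotalOrder le)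
    (f : Fin s → MvPowerSeries (Fin n) k) (μ : Fin s → (Fin n →₀ ℕ))
    (g : MvPowerSeries (Fin n) k) : MvPowerSeries (Fin n) k :=
  fun β => if slot μ β = none then ufun hle f μ g β else 0

open Classical in
lemma coeff_qdef (hle : IsAdditiveTotalOrder le)
    (f : Fin s → MvPowerSeries (Fin n) k) (μ : Fin s → (Fin n →₀ ℕ))
    (g : MvPowerSeries (Fin n) k) (i : Fin s) (γ : Fin n →₀ ℕ) :
    MvPowerSeries.coeff γ (qdef hle f μ g i) =
      if slot μ (γ + μ i) = some i then ufun hle f μ g (γ + μ i) else 0 := by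
  rw [MvPowerSeries.coeff_apply]
  rfl

open Classical in
lemma coeff_rdef (hle : IsAdditiveTotalOrder le)
    (f : Fin s → MvPowerSeries (Fin n) k) (μ : Fin s → (Fin n →₀ ℕ))
    (g : MvPowerSeries (Fin n) k) (β : Fin n →₀ ℕ) :
    MvPowerSeries.coeff β (rdef hle f μ g) =
      if slot μ β = none then ufun hle f μ g β else 0 := by
  rw [MvPowerSeries.coeff_apply]
  rfl

lemma hq_qdef (hle : IsAdditiveTotalOrder le)
    (f : Fin s → MvPowerSeries (Fin n) k) (μ : Fin s → (Fin n →₀ ℕ))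
    (g : MvPowerSeries (Fin n) k) (i : Fin s) (γ : Fin n →₀ ℕ)
    (h : MvPowerSeries.coeff γ (qdef hle f μ g i) ≠ 0) :
    slot μ (γ + μ i) = some i := by
  classical
  rw [coeff_qdef] at h
  by_contra hc
  rw [if_neg hc] at h
  exact h rfl

lemma hr_rdef (hle : IsAdditiveTotalOrder le)
    (f : Fin s → MvPowerSeries (Fin n) k) (μ : Fin s → (Fin n →₀ ℕ))
    (g : MvPowerSeries (Fin n) k) (β : Fin n →₀ ℕ)
    (h : MvPowerSeries.coeff β (rdef hle f μ g) ≠ 0) :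
    slot μ β = none := by
  classical
  rw [coeff_rdef] at h
  by_contra hc
  rw [if_neg hc] at h
  exact h rfl

lemma vfun_qdef_rdef (hle : IsAdditiveTotalOrder le)
    (f : Fin s → MvPowerSeries (Fin n) k) (μ : Fin s → (Fin n →₀ ℕ))
    (g : MvPowerSeries (Fin n) k) :
    vfun μ (qdef hle f μ g) (rdef hle f μ g) = ufun hle f μ g := by
  classical
  funext β
  unfold vfun
  cases hslot : slot μ β with
  | some i =>
    simp only []
    have hle0 : μ i ≤ β := le_of_slot_some hslot
    rw [coeff_qdef, tsub_add_cancel_of_le hle0, if_pos hslot]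
  | none =>
    simp only []
    rw [coeff_rdef, if_pos hslot]

lemma sum_eq (hle : IsAdditiveTotalOrder le)
    {f : Fin s → MvPowerSeries (Fin n) k} {μ : Fin s → (Fin n →₀ ℕ)}
    (hμ : ∀ i, IsLM le (f i) (μ i)) (g : MvPowerSeries (Fin n) k) :
    g = ∑ i, qdef hle f μ g i * f i + rdef hle f μ g := by
  apply MvPowerSeries.ext
  intro β
  rw [expand hle hμ (qdef hle f μ g) (rdef hle f μ g)
    (hq_qdef hle f μ g) (hr_rdef hle f μ g) β, vfun_qdef_rdef]
  cases hslot : slot μ β with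
  | some i =>
    have hc : MvPowerSeries.coeff (μ i) (f i) ≠ 0 := (hμ i).1
    have hu := ufun_eq hle f μ g β
    rw [hslot] at hu
    simp only [] at hu ⊢
    rw [hu]
    field_simp
    ring
  | none =>
    have hu := ufun_eq hle f μ g β
    rw [hslot] at hu
    simp only [] at hu ⊢
    rw [hu]
    ring

lemma ufun_lm (hle : IsAdditiveTotalOrder le)
    {f : Fin s → MvPowerSeries (Fin n) k} {μ : Fin s → (Fin n →₀ ℕ)}
    {g : MvPowerSeries (Fin n) k} {lmg : Fin n →₀ ℕ}
    (hlm : IsLM le g lmg) :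
    ∀ β, ufun hle f μ g β ≠ 0 → le lmg β := by
  have key : ∀ β, (∀ γ, slt le γ β → (ufun hle f μ g γ ≠ 0 → le lmg γ)) →
      (ufun hle f μ g β ≠ 0 → le lmg β) := by
    intro β IH hne
    by_cases hg : MvPowerSeries.coeff β g = 0
    · have hS : Sfun le f μ (ufun hle f μ g) β ≠ 0 := by
        intro hS0
        apply hne
        rw [ufun_eq hle f μ g β]
        cases hslot : slot μ β with
        | some i => rw [hg, hS0]; ring
        | none => rw [hg, hS0]; ring
      obtain ⟨j, -, hj⟩ := Finset.exists_ne_zero_of_sum_ne_zero hS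
      obtain ⟨p, hp, hp0⟩ := Finset.exists_ne_zero_of_sum_ne_zero hj
      have hcond : slt le (μ j) p.2 ∧ slot μ (p.1 + μ j) = some j := by
        by_contra hc
        rw [if_neg hc] at hp0
        exact hp0 rfl
      rw [if_pos hcond] at hp0
      have hune : ufun hle f μ g (p.1 + μ j) ≠ 0 := fun h0 => hp0 (by rw [h0, zero_mul])
      have hslt := point_slt hle hp hcond.1
      exact hle.trans _ _ _ (IH _ hslt hune) hslt.1
    · exact hlm.2 β hg
  intro β
  refine WellFounded.induction (C := fun b => ufun hle f μ g b ≠ 0 → le lmg b)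
    (sltWF hle) β fun β IH => key β IH

end Statement13Aux

open Statement13Aux

/-- multivariate right-division for commutative power series over a finite
field.  Let `k` be a finite field, `R = k[[x_1, …, x_n]]`, and `⪯` an additive total order
on `ℕⁿ`.  Let `F = (f_1, …, f_s)` be a tuple of nonzero elements of `R` with least monomials
`μ i = LM(f_i)`.  Then every `g ∈ R` can be written as `g = q_1 f_1 + ⋯ + q_s f_s + r` where
`supp(q_i) + LM(f_i) ⊆ Δ_{F,i}` for all `i` and `supp(r) ⊆ Δ̄_F`; the elements
`q_1, …, q_s, r` with these properties are unique; and moreover `LM(g) ⪯ LM(q_i f_i)`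
for every `i` with `q_i f_i ≠ 0`. -/
theorem statement13
    {n s : ℕ} {k : Type*} [Field k] [Finite k]
    (le : (Fin n →₀ ℕ) → (Fin n →₀ ℕ) → Prop) (hle : IsAdditiveTotalOrder le)
    (f : Fin s → MvPowerSeries (Fin n) k) (hf : ∀ i, f i ≠ 0)
    (μ : Fin s → (Fin n →₀ ℕ)) (hμ : ∀ i, IsLM le (f i) (μ i))
    (g : MvPowerSeries (Fin n) k) :
    ∃ (q : Fin s → MvPowerSeries (Fin n) k) (r : MvPowerSeries (Fin n) k),
      (g = ∑ i, q i * f i + r) ∧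
      (∀ i, ∀ β ∈ psupp (q i), InDelta μ i (β + μ i)) ∧
      (∀ β ∈ psupp r, InDeltaBar μ β) ∧
      (∀ i, ∀ lmg lmqf, IsLM le g lmg → IsLM le (q i * f i) lmqf → le lmg lmqf) ∧
      (∀ (q' : Fin s → MvPowerSeries (Fin n) k) (r' : MvPowerSeries (Fin n) k),
        (g = ∑ i, q' i * f i + r') →
        (∀ i, ∀ β ∈ psupp (q' i), InDelta μ i (β + μ i)) →
        (∀ β ∈ psupp r', InDeltaBar μ β) →
        q' = q ∧ r' = r) := by
  classical
  refine ⟨qdef hle f μ g, rdef hle f μ g, sum_eq hle hμ g, ?_, ?_, ?_, ?_⟩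
  · intro i β hβ
    have hβ' : MvPowerSeries.coeff β (qdef hle f μ g i) ≠ 0 := hβ
    exact slot_eq_some_iff.1 (hq_qdef hle f μ g i β hβ')
  · intro β hβ
    have hβ' : MvPowerSeries.coeff β (rdef hle f μ g) ≠ 0 := hβ
    exact slot_eq_none_iff.1 (hr_rdef hle f μ g β hβ')
  · intro i lmg lmqf hg hqf
    have h1 : MvPowerSeries.coeff lmqf (qdef hle f μ g i * f i) ≠ 0 := hqf.1
    rw [MvPowerSeries.coeff_mul] at h1
    obtain ⟨p, hp, hp0⟩ := Finset.exists_ne_zero_of_sum_ne_zero h1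
    have hq0 : MvPowerSeries.coeff p.1 (qdef hle f μ g i) ≠ 0 :=
      fun h => hp0 (by rw [h, zero_mul])
    have hf0 : MvPowerSeries.coeff p.2 (f i) ≠ 0 :=
      fun h => hp0 (by rw [h, mul_zero])
    have hslot := hq_qdef hle f μ g i p.1 hq0
    have hu : ufun hle f μ g (p.1 + μ i) ≠ 0 := by
      rw [coeff_qdef, if_pos hslot] at hq0
      exact hq0
    have h2 : le lmg (p.1 + μ i) := ufun_lm hle hg _ hu
    have h3 : le (p.1 + μ i) lmqf := by
      have hβ : p.1 + p.2 = lmqf := Finset.HasAntidiagonal.mem_antidiagonal.1 hp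
      have h4 : le (μ i) p.2 := (hμ i).2 p.2 hf0
      have h5 := hle.add_right (μ i) p.2 p.1 h4
      rw [add_comm (μ i) p.1, add_comm p.2 p.1] at h5
      rwa [hβ] at h5
    exact hle.trans _ _ _ h2 h3
  · intro q' r' hsum hqΔ hrΔ
    have hq' : ∀ i γ, MvPowerSeries.coeff γ (q' i) ≠ 0 → slot μ (γ + μ i) = some i :=
      fun i γ h => slot_eq_some_iff.2 (hqΔ i γ h)
    have hr' : ∀ β, MvPowerSeries.coeff β r' ≠ 0 → slot μ β = none :=
      fun β h => slot_eq_none_iff.2 (hrΔ β h)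
    have hfp := fp_of_sol hle hμ q' r' hq' hr' hsum
    have hveq : vfun μ q' r' = ufun hle f μ g := fp_unique hle hfp (fp_ufun hle f μ g)
    constructor
    · funext i
      apply MvPowerSeries.ext
      intro γ
      rw [coeff_qdef]
      by_cases hsl : slot μ (γ + μ i) = some i
      · rw [if_pos hsl]
        have hthis := congrFun hveq (γ + μ i)
        unfold vfun at hthis
        rw [hsl] at hthis
        simp only [] at hthis
        have h5 : (γ + μ i) - μ i = γ := by simp
        rw [h5] at hthis
        exact hthis
      · rw [if_neg hsl]
        by_contra h0
        exact hsl (hq' i γ h0)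
    · apply MvPowerSeries.ext
      intro β
      rw [coeff_rdef]
      by_cases hsl : slot μ β = none
      · rw [if_pos hsl]
        have hthis := congrFun hveq β
        unfold vfun at hthis
        rw [hsl] at hthis
        simp only [] at hthis
        exact hthis
      · rw [if_neg hsl]
        by_contra h0
        exact hsl (hr' β h0)
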